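/- The maximum frequency over all pairs equals the maximum frequency over all maximal repeats: if T contains some length-2 substring occurring at least twice, then max{ occ_T(p) : p a length-2 substring of T with occ_T(p) ≥ 2 } = max{ occ_T(r) : r a maximal repeat of T }. -/

import Mathlib

/-- Number of occurrences of `s` as a substring of `T` (positions where `s` is a prefix of a suffix of `T`). -/
def occ {α : Type*} [DecidableEq α] (T s : List α) : ℕ :=
  ((List.range (T.length + 1)).filter (fun i => decide (s <+: T.drop i))).length

/-- `r` is a maximal repeat of `T`. -/
def MaximalRepeat {α : Type*} [DecidableEq α] (T r : List α) : Prop :=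
  2 ≤ r.length ∧ 2 ≤ occ T r ∧
    (∀ c : α, occ T (c :: r) < occ T r) ∧ (∀ c : α, occ T (r ++ [c]) < occ T r)

lemma occ_eq_card {α : Type*} [DecidableEq α] (T s : List α) :
    occ T s = ((Finset.range (T.length + 1)).filter (fun i => s <+: T.drop i)).card := by
  rfl

lemma occ_le_of_prefix {α : Type*} [DecidableEq α] (T s t : List α) (h : s <+: t) :
    occ T t ≤ occ T s := by
  rw [occ_eq_card, occ_eq_card]
  apply Finset.card_le_card
  intro i hi
  simp only [Finset.mem_filter] at hi ⊢
  exact ⟨hi.1, h.trans hi.2⟩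

lemma occ_cons_le {α : Type*} [DecidableEq α] (T r : List α) (c : α) :
    occ T (c :: r) ≤ occ T r := by
  rw [occ_eq_card, occ_eq_card]
  apply Finset.card_le_card_of_injOn (fun i => i + 1)
  · intro i hi
    simp only [Finset.mem_coe, Finset.mem_filter, Finset.mem_range] at hi ⊢
    obtain ⟨hi1, t, ht⟩ := hi
    have hdrop : T.drop (i + 1) = r ++ t := by
      have h1 : T.drop (i + 1) = (T.drop i).drop 1 := by
        rw [List.drop_drop]
      rw [h1, ← ht]; simp
    constructor
    · have : i < T.length := by
        by_contra hcon
        push_neg at hcon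
        rw [List.drop_eq_nil_of_le hcon] at ht
        simp at ht
      omega
    · exact ⟨t, hdrop.symm⟩
  · intro a _ b _ hab
    simpa using hab

lemma length_le_of_occ_pos {α : Type*} [DecidableEq α] (T r : List α) (h : 1 ≤ occ T r) :
    r.length ≤ T.length := by
  rw [occ_eq_card] at h
  obtain ⟨i, hi⟩ := Finset.card_pos.mp h
  simp only [Finset.mem_filter] at hi
  have := hi.2.length_le
  simp only [List.length_drop] at this
  omega

lemma exists_mr {α : Type*} [DecidableEq α] (T : List α) (M : ℕ) (hM2 : 2 ≤ M)
    (hub : ∀ s : List α, 2 ≤ s.length → 2 ≤ occ T s → occ T s ≤ M) :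
    ∀ k : ℕ, ∀ r : List α, 2 ≤ r.length → occ T r = M → T.length + 1 - r.length ≤ k →
      ∃ r', MaximalRepeat T r' ∧ occ T r' = M := by
  intro k
  induction k with
  | zero =>
    intro r hr2 hrM hk
    have := length_le_of_occ_pos T r (by omega)
    omega
  | succ k ih =>
    intro r hr2 hrM hk
    by_cases hc : (∀ c : α, occ T (c :: r) < occ T r) ∧ (∀ c : α, occ T (r ++ [c]) < occ T r)
    · exact ⟨r, ⟨hr2, by omega, hc.1, hc.2⟩, hrM⟩
    · push_neg at hc
      have hlen : r.length ≤ T.length := length_le_of_occ_pos T r (by omega)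
      rcases Classical.em (∀ c : α, occ T (c :: r) < occ T r) with hL | hL
      · -- right extension exists
        obtain ⟨c, hcge⟩ := hc hL
        have hle : occ T (r ++ [c]) ≤ occ T r :=
          occ_le_of_prefix T r (r ++ [c]) ⟨[c], rfl⟩
        have heq : occ T (r ++ [c]) = M := by omega
        have := ih (r ++ [c]) (by simp; omega) heq (by simp; omega)
        exact this
      · push_neg at hL
        obtain ⟨c, hcge⟩ := hL
        have hle : occ T (c :: r) ≤ occ T r := occ_cons_le T r c
        have heq : occ T (c :: r) = M := by omega
        exact ih (c :: r) (by simp; omega) heq (by simp; omega)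

theorem max_pair_freq_eq_max_maximal_repeat_freq {α : Type*} [DecidableEq α] (T : List α)
    (h : ∃ p : List α, p.length = 2 ∧ 2 ≤ occ T p) :
    ∃ M : ℕ,
      (∀ p : List α, p.length = 2 → 2 ≤ occ T p → occ T p ≤ M) ∧
      (∃ p : List α, p.length = 2 ∧ 2 ≤ occ T p ∧ occ T p = M) ∧
      (∀ r : List α, MaximalRepeat T r → occ T r ≤ M) ∧
      (∃ r : List α, MaximalRepeat T r ∧ occ T r = M) := by
  classical
  set V : Set ℕ := {n | ∃ p : List α, p.length = 2 ∧ 2 ≤ occ T p ∧ occ T p = n} with hV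
  have hne : V.Nonempty := by
    obtain ⟨p, hp2, hpocc⟩ := h
    exact ⟨occ T p, p, hp2, hpocc, rfl⟩
  have hbdd : BddAbove V := by
    refine ⟨T.length + 1, ?_⟩
    rintro n ⟨p, _, _, rfl⟩
    calc occ T p ≤ (List.range (T.length + 1)).length := List.length_filter_le _ _
      _ = T.length + 1 := List.length_range
  set M := sSup V with hM
  obtain ⟨p, hp2, hpocc, hpM⟩ := Nat.sSup_mem hne hbdd
  have hub : ∀ q : List α, q.length = 2 → 2 ≤ occ T q → occ T q ≤ M := by
    intro q hq2 hqocc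
    exact le_csSup hbdd ⟨q, hq2, hqocc, rfl⟩
  have hub' : ∀ s : List α, 2 ≤ s.length → 2 ≤ occ T s → occ T s ≤ M := by
    intro s hs2 hsocc
    have hpre : s.take 2 <+: s := List.take_prefix _ _
    have hle : occ T s ≤ occ T (s.take 2) := occ_le_of_prefix T _ _ hpre
    have htl : (s.take 2).length = 2 := by
      rw [List.length_take]; omega
    exact hle.trans (hub _ htl (by omega))
  have hM2 : 2 ≤ M := by omega
  refine ⟨M, hub, ⟨p, hp2, hpocc, hpM⟩, ?_, ?_⟩
  · intro r hr
    exact hub' r hr.1 hr.2.1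
  · exact exists_mr T M hM2 hub' (T.length + 1) p (by omega) hpM (by omega)
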